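/- arXiv:2601.02844 — 2 statements merged into one kernel-verified Lean document; each statement's English description precedes it below -/
import Mathlib

section
/- Let r ∈ [n] with 2r ≤ n, and let π ∈ S_{2r}. Then the centralizer C_{S_n}(π) acts on Ω_{n,r}(π) by simultaneous conjugation, (σ,τ)·δ := (δ⁻¹σδ, δ⁻¹τδ), and the number of orbits of this action equals the number of orbits of the conjugation action of C_{S_{2r}}(π) on Ω_{2r,r}(π). -/
open Finset

abbrev P (n : ℕ) := Equiv.Perm (Fin n)

def FixesOutside (n m : ℕ) (ρ : P n) : Prop :=
  ∀ i : Fin n, ¬ ((i : ℕ) < m) → ρ i = i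

instance (n m : ℕ) : DecidablePred (FixesOutside n m) := fun _ =>
  inferInstanceAs (Decidable (∀ _, _))

/-- T_r^s : permutations moving at most r points, all lying in [s]. -/
def Trs (n r s : ℕ) : Finset (P n) :=
  univ.filter fun σ => σ.support.card ≤ r ∧ FixesOutside n s σ

/-- Ω_{s,r}(π) = {(σ,τ) ∈ T_r^s × T_r^s : στ = π}. -/
def OmS (n r s : ℕ) (π : P n) : Finset (P n × P n) :=
  ((Trs n r s) ×ˢ (Trs n r s)).filter fun p => p.1 * p.2 = π

/-- C_{S_{[s]}}(π), the centralizer of π in the subgroup S_{[s]} of S_n. -/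
def cent (n s : ℕ) (π : P n) : Finset (P n) :=
  univ.filter fun δ => δ * π = π * δ ∧ FixesOutside n s δ

/-- the orbit of x under simultaneous conjugation by elements of C. -/
def orbitOf (n : ℕ) (C : Finset (P n)) (Ω : Finset (P n × P n)) (x : P n × P n) :
    Finset (P n × P n) :=
  Ω.filter fun y => ∃ δ ∈ C, (δ⁻¹ * x.1 * δ, δ⁻¹ * x.2 * δ) = y

/-- the number of orbits of the simultaneous-conjugation action of C on Ω. -/
def numOrbits (n : ℕ) (C : Finset (P n)) (Ω : Finset (P n × P n)) : ℕ :=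
  (Ω.image (orbitOf n C Ω)).card

namespace Lemma33

variable {n : ℕ}

def conjP (δ : P n) (x : P n × P n) : P n × P n := (δ⁻¹ * x.1 * δ, δ⁻¹ * x.2 * δ)

lemma fixesOutside_top (ρ : P n) : FixesOutside n n ρ :=
  fun i hi => absurd i.isLt hi

def Kset (n m : ℕ) : Finset (Fin n) := univ.filter fun i => (i : ℕ) < m

lemma mem_Kset {m : ℕ} {i : Fin n} : i ∈ Kset n m ↔ (i : ℕ) < m := by
  simp [Kset]

lemma fixesOutside_iff {m : ℕ} {ρ : P n} :
    FixesOutside n m ρ ↔ ρ.support ⊆ Kset n m := by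
  constructor
  · intro h i hi
    rw [mem_Kset]
    by_contra hlt
    exact (Equiv.Perm.mem_support.mp hi) (h i hlt)
  · intro h i hi
    by_contra hne
    exact hi (mem_Kset.mp (h (Equiv.Perm.mem_support.mpr hne)))

lemma card_Kset {m : ℕ} (h : m ≤ n) : (Kset n m).card = m := by
  have : Kset n m = (univ : Finset (Fin m)).map
      ⟨fun j => ⟨(j : ℕ), lt_of_lt_of_le j.2 h⟩, by
        intro a b hab
        simpa [Fin.ext_iff] using hab⟩ := by
    ext i
    simp only [mem_Kset, Finset.mem_map, Finset.mem_univ, true_and,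
      Function.Embedding.coeFn_mk]
    constructor
    · intro hi
      exact ⟨⟨(i : ℕ), hi⟩, by simp [Fin.ext_iff]; rfl⟩
    · rintro ⟨j, rfl⟩
      exact j.2
  rw [this, Finset.card_map, Finset.card_univ, Fintype.card_fin]

lemma mem_Trs {r s : ℕ} {σ : P n} :
    σ ∈ Trs n r s ↔ σ.support.card ≤ r ∧ FixesOutside n s σ := by
  simp [Trs]

lemma mem_OmS {r s : ℕ} {π : P n} {x : P n × P n} :
    x ∈ OmS n r s π ↔ x.1 ∈ Trs n r s ∧ x.2 ∈ Trs n r s ∧ x.1 * x.2 = π := by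
  simp [OmS, Finset.mem_filter, Finset.mem_product, and_assoc]

lemma mem_cent {s : ℕ} {π δ : P n} :
    δ ∈ cent n s π ↔ δ * π = π * δ ∧ FixesOutside n s δ := by
  simp [cent]

lemma one_mem_cent {s : ℕ} (π : P n) : (1 : P n) ∈ cent n s π :=
  mem_cent.mpr ⟨by simp, fun i _ => rfl⟩

lemma mul_mem_cent {s : ℕ} {π δ₁ δ₂ : P n}
    (h1 : δ₁ ∈ cent n s π) (h2 : δ₂ ∈ cent n s π) : δ₁ * δ₂ ∈ cent n s π := by
  rw [mem_cent] at *
  refine ⟨by rw [mul_assoc, h2.1, ← mul_assoc, h1.1, mul_assoc], fun i hi => ?_⟩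
  rw [Equiv.Perm.mul_apply, h2.2 i hi, h1.2 i hi]

lemma inv_mem_cent {s : ℕ} {π δ : P n} (h : δ ∈ cent n s π) : δ⁻¹ ∈ cent n s π := by
  rw [mem_cent] at *
  refine ⟨(show Commute δ π from h.1).inv_left, fun i hi => ?_⟩
  conv_lhs => rw [← h.2 i hi]
  exact δ.symm_apply_apply i

lemma mem_orbitOf {C : Finset (P n)} {Ω : Finset (P n × P n)} {x y : P n × P n} :
    y ∈ orbitOf n C Ω x ↔ y ∈ Ω ∧ ∃ δ ∈ C, conjP δ x = y := by
  simp [orbitOf, conjP]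

lemma conjP_conjP (δ ε : P n) (x : P n × P n) :
    conjP ε (conjP δ x) = conjP (δ * ε) x := by
  simp [conjP, mul_inv_rev, mul_assoc]

lemma self_mem_orbitOf {s : ℕ} {π : P n} {Ω : Finset (P n × P n)} {x : P n × P n}
    (hx : x ∈ Ω) : x ∈ orbitOf n (cent n s π) Ω x :=
  mem_orbitOf.mpr ⟨hx, 1, one_mem_cent π, by simp [conjP]⟩

lemma orbitOf_eq_of_mem {s : ℕ} {π : P n} {Ω : Finset (P n × P n)} {x y : P n × P n}
    (hx : x ∈ Ω) (hy : y ∈ orbitOf n (cent n s π) Ω x) :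
    orbitOf n (cent n s π) Ω y = orbitOf n (cent n s π) Ω x := by
  obtain ⟨hyΩ, δ, hδ, hconj⟩ := mem_orbitOf.mp hy
  ext z
  rw [mem_orbitOf, mem_orbitOf]
  constructor
  · rintro ⟨hz, ε, hε, hcz⟩
    exact ⟨hz, δ * ε, mul_mem_cent hδ hε, by rw [← hcz, ← hconj, conjP_conjP]⟩
  · rintro ⟨hz, ε, hε, hcz⟩
    refine ⟨hz, δ⁻¹ * ε, mul_mem_cent (inv_mem_cent hδ) hε, ?_⟩
    rw [← hconj, conjP_conjP, ← hcz]
    congr 1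
    group

lemma comm_apply {δ π : P n} (h : δ * π = π * δ) (a : Fin n) :
    δ⁻¹ (π a) = π (δ⁻¹ a) := by
  have hi : δ⁻¹ * π = π * δ⁻¹ := (show Commute δ π from h).inv_left
  have := congrArg (fun ρ : P n => ρ a) hi
  simpa [Equiv.Perm.mul_apply] using this

lemma commute_perm (e ρ : P n)
    (h1 : ∀ a ∈ ρ.support, e (ρ a) = ρ (e a))
    (h2 : ∀ a, a ∉ ρ.support → e a ∉ ρ.support) :
    e * ρ = ρ * e := by
  apply Equiv.ext
  intro z
  simp only [Equiv.Perm.mul_apply]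
  by_cases hz : z ∈ ρ.support
  · exact h1 z hz
  · rw [Equiv.Perm.notMem_support.mp hz, Equiv.Perm.notMem_support.mp (h2 z hz)]

lemma conj_eq_of_pointwise (e σ σ' : P n) (h : ∀ w, e (σ w) = σ' (e w)) :
    (e⁻¹)⁻¹ * σ * e⁻¹ = σ' := by
  apply Equiv.ext
  intro z
  simp only [inv_inv, Equiv.Perm.mul_apply]
  rw [h (e⁻¹ z)]; exact congrArg σ' (e.apply_symm_apply z)

lemma exists_ext (A : Finset (Fin n)) (f : Fin n → Fin n)
    (hinj : ∀ a ∈ A, ∀ b ∈ A, f a = f b → a = b) :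
    ∃ e : P n, (∀ a ∈ A, e a = f a) ∧ ∀ a ∉ A, e a ∉ A.image f := by
  classical
  have hg : ∀ a : {x // x ∈ A}, f a.1 ∈ A.image f := fun a => Finset.mem_image_of_mem f a.2
  let g : {x // x ∈ A} → {x // x ∈ A.image f} := fun a => ⟨f a.1, hg a⟩
  have hgbij : Function.Bijective g := by
    constructor
    · intro a b hab
      exact Subtype.ext (hinj a.1 a.2 b.1 b.2 (congrArg Subtype.val hab))
    · rintro ⟨b, hb⟩
      obtain ⟨a, ha, rfl⟩ := Finset.mem_image.mp hb
      exact ⟨⟨a, ha⟩, rfl⟩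
  let E : {x // x ∈ A} ≃ {x // x ∈ A.image f} := Equiv.ofBijective g hgbij
  refine ⟨E.extendSubtype, fun a ha => ?_, fun a ha => Equiv.extendSubtype_not_mem E a ha⟩
  rw [Equiv.extendSubtype_apply_of_mem E a ha]
  rfl


lemma moveIn {r : ℕ} (h2r : 2 * r ≤ n) {π : P n} (hπ : FixesOutside n (2 * r) π)
    {x : P n × P n} (hx : x ∈ OmS n r n π) :
    ∃ δ ∈ cent n n π, conjP δ x ∈ OmS n r (2 * r) π := by
  classical
  obtain ⟨hx1, hx2, hprod⟩ := mem_OmS.mp hx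
  set A : Finset (Fin n) := x.1.support ∪ x.2.support with hA
  set Sπ : Finset (Fin n) := π.support with hSπ
  have hSA : Sπ ⊆ A := by
    rw [hSπ, ← hprod]; exact Equiv.Perm.support_mul_le x.1 x.2
  have hSK : Sπ ⊆ Kset n (2 * r) := fixesOutside_iff.mp hπ
  have hAcard : A.card ≤ 2 * r := by
    have h1 := (mem_Trs.mp hx1).1
    have h2 := (mem_Trs.mp hx2).1
    have h3 := Finset.card_union_le x.1.support x.2.support
    rw [← hA] at h3
    omega
  have hle : (A \ Sπ).card ≤ (Kset n (2 * r) \ Sπ).card := by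
    rw [Finset.card_sdiff_of_subset hSA, Finset.card_sdiff_of_subset hSK, card_Kset h2r]
    omega
  obtain ⟨B, hBsub, hBcard⟩ := Finset.exists_subset_card_eq hle
  have hBnotS : ∀ b ∈ B, b ∉ Sπ := fun b hb => (Finset.mem_sdiff.mp (hBsub hb)).2
  have hBK : ∀ b ∈ B, b ∈ Kset n (2 * r) := fun b hb => (Finset.mem_sdiff.mp (hBsub hb)).1
  have hcards : Fintype.card {a // a ∈ A \ Sπ} = Fintype.card {a // a ∈ B} := by
    rw [Fintype.card_coe, Fintype.card_coe, hBcard]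
  let g : {a // a ∈ A \ Sπ} ≃ {a // a ∈ B} := Fintype.equivOfCardEq hcards
  set f : Fin n → Fin n := fun a => if h : a ∈ A \ Sπ then (g ⟨a, h⟩ : Fin n) else a with hf
  have fval : ∀ a (h : a ∈ A \ Sπ), f a = (g ⟨a, h⟩ : Fin n) := by
    intro a h; exact dif_pos h
  have fB : ∀ a (h : a ∈ A \ Sπ), f a ∈ B := by
    intro a h; rw [fval a h]; exact (g ⟨a, h⟩).2
  have fid : ∀ a, a ∉ A \ Sπ → f a = a := by
    intro a h; exact dif_neg h
  have hSfix : ∀ a ∈ Sπ, f a = a := fun a ha =>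
    fid a (fun h => (Finset.mem_sdiff.mp h).2 ha)
  have hinj : ∀ a ∈ A, ∀ b ∈ A, f a = f b → a = b := by
    intro a ha b hb hab
    by_cases h1 : a ∈ A \ Sπ <;> by_cases h2 : b ∈ A \ Sπ
    · rw [fval a h1, fval b h2] at hab
      have := g.injective (Subtype.ext hab)
      exact congrArg Subtype.val this
    · exfalso
      have hbS : b ∈ Sπ := by
        by_contra hbS; exact h2 (Finset.mem_sdiff.mpr ⟨hb, hbS⟩)
      rw [fid b h2] at hab
      exact hBnotS _ (fB a h1) (hab ▸ hbS)
    · exfalso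
      have haS : a ∈ Sπ := by
        by_contra haS; exact h1 (Finset.mem_sdiff.mpr ⟨ha, haS⟩)
      rw [fid a h1] at hab
      exact hBnotS _ (fB b h2) (hab ▸ haS)
    · rw [fid a h1, fid b h2] at hab; exact hab
  obtain ⟨e, heA, heN⟩ := exists_ext A f hinj
  have hSim : Sπ ⊆ A.image f := by
    intro a ha
    exact Finset.mem_image.mpr ⟨a, hSA ha, hSfix a ha⟩
  have eS : ∀ a ∈ Sπ, e a = a := by
    intro a ha; rw [heA a (hSA ha), hSfix a ha]
  have eNotS : ∀ a, a ∉ Sπ → e a ∉ Sπ := by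
    intro a ha
    by_cases haA : a ∈ A
    · have h1 : a ∈ A \ Sπ := Finset.mem_sdiff.mpr ⟨haA, ha⟩
      rw [heA a haA]
      exact fun hc => hBnotS _ (fB a h1) hc
    · exact fun hc => heN a haA (hSim hc)
  have eK : ∀ a ∈ A, e a ∈ Kset n (2 * r) := by
    intro a haA
    rw [heA a haA]
    by_cases h1 : a ∈ A \ Sπ
    · exact hBK _ (fB a h1)
    · rw [fid a h1]
      have haS : a ∈ Sπ := by
        by_contra haS; exact h1 (Finset.mem_sdiff.mpr ⟨haA, haS⟩)
      exact hSK haS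
  have hcomm : e * π = π * e := by
    apply commute_perm
    · intro a ha
      rw [eS _ (Equiv.Perm.apply_mem_support.mpr ha), eS _ ha]
    · exact eNotS
  refine ⟨e⁻¹, mem_cent.mpr ⟨(show Commute e π from hcomm).inv_left, fixesOutside_top _⟩, ?_⟩
  have hsupp : ∀ σ₀ : P n, σ₀.support ⊆ A →
      ((e⁻¹)⁻¹ * σ₀ * e⁻¹).support.card = σ₀.support.card ∧
      FixesOutside n (2 * r) ((e⁻¹)⁻¹ * σ₀ * e⁻¹) := by
    intro σ₀ hσ₀
    have hconj : ((e⁻¹)⁻¹ * σ₀ * e⁻¹).support = σ₀.support.map e.toEmbedding := by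
      rw [inv_inv]
      have : e * σ₀ * e⁻¹ = e * σ₀ * e⁻¹ := rfl
      exact Equiv.Perm.support_conj
    constructor
    · rw [hconj, Finset.card_map]
    · rw [fixesOutside_iff, hconj]
      intro b hb
      obtain ⟨a, ha, rfl⟩ := Finset.mem_map.mp hb
      exact eK a (hσ₀ ha)
  rw [mem_OmS]
  have hs1 := hsupp x.1 (Finset.subset_union_left)
  have hs2 := hsupp x.2 (Finset.subset_union_right)
  refine ⟨mem_Trs.mpr ⟨?_, hs1.2⟩, mem_Trs.mpr ⟨?_, hs2.2⟩, ?_⟩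
  · rw [show (conjP e⁻¹ x).1 = (e⁻¹)⁻¹ * x.1 * e⁻¹ from rfl, hs1.1]
    exact (mem_Trs.mp hx1).1
  · rw [show (conjP e⁻¹ x).2 = (e⁻¹)⁻¹ * x.2 * e⁻¹ from rfl, hs2.1]
    exact (mem_Trs.mp hx2).1
  · show (e⁻¹)⁻¹ * x.1 * e⁻¹ * ((e⁻¹)⁻¹ * x.2 * e⁻¹) = π
    rw [inv_inv]
    have : e * x.1 * e⁻¹ * (e * x.2 * e⁻¹) = e * (x.1 * x.2) * e⁻¹ := by group
    rw [this, hprod, hcomm, mul_assoc, mul_inv_cancel, mul_one]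


lemma restrict {r : ℕ} (h2r : 2 * r ≤ n) {π : P n} {x y : P n × P n}
    (hx : x ∈ OmS n r (2 * r) π) (hy : y ∈ OmS n r (2 * r) π)
    {δ : P n} (hδ : δ ∈ cent n n π) (hc : conjP δ x = y) :
    ∃ δ' ∈ cent n (2 * r) π, conjP δ' x = y := by
  classical
  obtain ⟨hx1, hx2, hxprod⟩ := mem_OmS.mp hx
  obtain ⟨hy1, hy2, hyprod⟩ := mem_OmS.mp hy
  have hδc : δ * π = π * δ := (mem_cent.mp hδ).1
  have hc1 : δ⁻¹ * x.1 * δ = y.1 := congrArg Prod.fst hc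
  have hc2 : δ⁻¹ * x.2 * δ = y.2 := congrArg Prod.snd hc
  set K : Finset (Fin n) := Kset n (2 * r) with hK
  set A : Finset (Fin n) := x.1.support ∪ x.2.support with hA
  set A' : Finset (Fin n) := y.1.support ∪ y.2.support with hA'
  set Sπ : Finset (Fin n) := π.support with hSπ
  have hSA : Sπ ⊆ A := by rw [hSπ, ← hxprod]; exact Equiv.Perm.support_mul_le x.1 x.2
  have hSA' : Sπ ⊆ A' := by rw [hSπ, ← hyprod]; exact Equiv.Perm.support_mul_le y.1 y.2
  have hAK : A ⊆ K := Finset.union_subset (fixesOutside_iff.mp (mem_Trs.mp hx1).2)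
      (fixesOutside_iff.mp (mem_Trs.mp hx2).2)
  have hA'K : A' ⊆ K := Finset.union_subset (fixesOutside_iff.mp (mem_Trs.mp hy1).2)
      (fixesOutside_iff.mp (mem_Trs.mp hy2).2)
  have hA'im : A' = A.image (fun a => δ⁻¹ a) := by
    have e1 : y.1.support = x.1.support.map δ⁻¹.toEmbedding := by
      rw [← hc1]
      have : δ⁻¹ * x.1 * δ = δ⁻¹ * x.1 * (δ⁻¹)⁻¹ := by rw [inv_inv]
      rw [this]
      exact Equiv.Perm.support_conj
    have e2 : y.2.support = x.2.support.map δ⁻¹.toEmbedding := by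
      rw [← hc2]
      have : δ⁻¹ * x.2 * δ = δ⁻¹ * x.2 * (δ⁻¹)⁻¹ := by rw [inv_inv]
      rw [this]
      exact Equiv.Perm.support_conj
    rw [hA', e1, e2, hA, Finset.map_eq_image, Finset.map_eq_image, Finset.image_union]
    simp [Equiv.coe_toEmbedding]
  have hmemA' : ∀ a ∈ A, δ⁻¹ a ∈ A' := by
    intro a ha; rw [hA'im]; exact Finset.mem_image_of_mem _ ha
  have hcardAA' : A'.card = A.card := by
    rw [hA'im]; exact Finset.card_image_of_injective _ (Equiv.injective _)
  have hcards : Fintype.card {a // a ∈ K \ A} = Fintype.card {a // a ∈ K \ A'} := by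
    rw [Fintype.card_coe, Fintype.card_coe, Finset.card_sdiff_of_subset hAK, Finset.card_sdiff_of_subset hA'K,
      hcardAA']
  let g : {a // a ∈ K \ A} ≃ {a // a ∈ K \ A'} := Fintype.equivOfCardEq hcards
  set f : Fin n → Fin n :=
    fun a => if a ∈ A then δ⁻¹ a else if h : a ∈ K \ A then (g ⟨a, h⟩ : Fin n) else a with hf
  have v1 : ∀ a ∈ A, f a = δ⁻¹ a := fun a ha => if_pos ha
  have v2 : ∀ a (h : a ∈ K \ A), f a = (g ⟨a, h⟩ : Fin n) := by
    intro a h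
    have : a ∉ A := (Finset.mem_sdiff.mp h).2
    show (if a ∈ A then δ⁻¹ a else if h : a ∈ K \ A then (g ⟨a, h⟩ : Fin n) else a) = _
    rw [if_neg this, dif_pos h]
  have v2' : ∀ a (h : a ∈ K \ A), f a ∈ K \ A' := by
    intro a h; rw [v2 a h]; exact (g ⟨a, h⟩).2
  have v3 : ∀ a, a ∉ K → f a = a := by
    intro a h
    have h1 : a ∉ A := fun hc => h (hAK hc)
    have h2 : a ∉ K \ A := fun hc => h (Finset.mem_sdiff.mp hc).1
    show (if a ∈ A then δ⁻¹ a else if h : a ∈ K \ A then (g ⟨a, h⟩ : Fin n) else a) = a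
    rw [if_neg h1, dif_neg h2]
  have hzone : ∀ a, (a ∈ A ∧ f a ∈ A') ∨ (a ∉ A ∧ a ∈ K ∧ f a ∈ K \ A') ∨
      (a ∉ K ∧ f a = a) := by
    intro a
    by_cases h1 : a ∈ A
    · exact Or.inl ⟨h1, by rw [v1 a h1]; exact hmemA' a h1⟩
    · by_cases h2 : a ∈ K
      · exact Or.inr (Or.inl ⟨h1, h2, v2' a (Finset.mem_sdiff.mpr ⟨h2, h1⟩)⟩)
      · exact Or.inr (Or.inr ⟨h2, v3 a h2⟩)
  have hinj : Function.Injective f := by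
    intro a b hab
    rcases hzone a with ⟨ha, hfa⟩ | ⟨ha, haK, hfa⟩ | ⟨ha, hfa⟩ <;>
      rcases hzone b with ⟨hb, hfb⟩ | ⟨hb, hbK, hfb⟩ | ⟨hb, hfb⟩
    · rw [v1 a ha, v1 b hb] at hab; exact δ⁻¹.injective hab
    · exact absurd (hab ▸ hfa) (fun hc => (Finset.mem_sdiff.mp hfb).2 (hab ▸ hfa))
    · exact absurd (hA'K hfa) (by rw [hab, hfb]; exact hb)
    · exact absurd (hab ▸ hfb) (fun hc => (Finset.mem_sdiff.mp hfa).2 (hab ▸ hfb))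
    · have h1 := v2 a (Finset.mem_sdiff.mpr ⟨haK, ha⟩)
      have h2 := v2 b (Finset.mem_sdiff.mpr ⟨hbK, hb⟩)
      rw [h1, h2] at hab
      have := g.injective (Subtype.ext hab)
      exact congrArg Subtype.val this
    · exact absurd ((Finset.mem_sdiff.mp hfa).1) (by rw [hab, hfb]; exact hb)
    · exact absurd (hA'K hfb) (by rw [← hab, hfa]; exact ha)
    · exact absurd ((Finset.mem_sdiff.mp hfb).1) (by rw [← hab, hfa]; exact ha)
    · rw [hfa, hfb] at hab; exact hab
  let e : P n := Equiv.ofBijective f (Finite.injective_iff_bijective.mp hinj)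
  have he : ∀ a, e a = f a := fun a => rfl
  have heA : ∀ a ∈ A, e a = δ⁻¹ a := fun a ha => by rw [he, v1 a ha]
  have heK : ∀ a, a ∉ K → e a = a := fun a ha => by rw [he, v3 a ha]
  have heA' : ∀ a, a ∉ A → e a ∉ A' := by
    intro a ha
    rcases hzone a with ⟨h1, _⟩ | ⟨_, _, h3⟩ | ⟨_, h3⟩
    · exact absurd h1 ha
    · rw [he]; exact (Finset.mem_sdiff.mp h3).2
    · rw [he, h3]; exact fun hc => ‹a ∉ K› (hA'K hc)
  have heS : ∀ a, a ∉ Sπ → e a ∉ Sπ := by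
    intro a ha
    by_cases haA : a ∈ A
    · rw [heA a haA, Equiv.Perm.notMem_support]
      rw [Equiv.Perm.notMem_support] at ha
      rw [← comm_apply hδc a, ha]
    · exact fun hc => heA' a haA (hSA' hc)
  have hcomm : e * π = π * e := by
    apply commute_perm
    · intro a ha
      rw [heA _ (hSA (by rw [hSπ]; exact Equiv.Perm.apply_mem_support.mpr ha)),
        heA _ (hSA ha), comm_apply hδc a]
    · exact heS
  refine ⟨e⁻¹, mem_cent.mpr ⟨(show Commute e π from hcomm).inv_left, ?_⟩, ?_⟩
  · intro i hi
    have hiK : i ∉ K := by rw [hK]; exact fun hc => hi (mem_Kset.mp hc)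
    have := heK i hiK
    calc e⁻¹ i = e⁻¹ (e i) := by rw [this]
    _ = i := e.symm_apply_apply i
  · have hcomp : ∀ (σ₀ σ₀' : P n), σ₀.support ⊆ A → σ₀'.support ⊆ A' →
        δ⁻¹ * σ₀ * δ = σ₀' → (e⁻¹)⁻¹ * σ₀ * e⁻¹ = σ₀' := by
      intro σ₀ σ₀' hs hs' hcs
      apply conj_eq_of_pointwise
      intro w
      by_cases hw : w ∈ A
      · have hσw : σ₀ w ∈ A := by
          by_cases hws : w ∈ σ₀.support
          · exact hs (Equiv.Perm.apply_mem_support.mpr hws)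
          · rw [Equiv.Perm.notMem_support.mp hws]; exact hw
        rw [heA _ hσw, heA _ hw, ← hcs]
        simp [Equiv.Perm.mul_apply]
      · rw [Equiv.Perm.notMem_support.mp (fun hc => hw (hs hc))]
        have := heA' w hw
        exact (Equiv.Perm.notMem_support.mp (fun hc => this (hs' hc))).symm
    have hcx1 := hcomp x.1 y.1 Finset.subset_union_left Finset.subset_union_left hc1
    have hcx2 := hcomp x.2 y.2 Finset.subset_union_right Finset.subset_union_right hc2
    show ((e⁻¹)⁻¹ * x.1 * e⁻¹, (e⁻¹)⁻¹ * x.2 * e⁻¹) = y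
    rw [hcx1, hcx2]


lemma conj_mem_OmS_top {r : ℕ} {π : P n} {δ : P n} {x : P n × P n}
    (hδ : δ ∈ cent n n π) (hx : x ∈ OmS n r n π) : conjP δ x ∈ OmS n r n π := by
  obtain ⟨hx1, hx2, hprod⟩ := mem_OmS.mp hx
  obtain ⟨hδc, -⟩ := mem_cent.mp hδ
  have hsupp : ∀ σ₀ : P n, (δ⁻¹ * σ₀ * δ).support.card = σ₀.support.card := by
    intro σ₀
    have : δ⁻¹ * σ₀ * δ = δ⁻¹ * σ₀ * (δ⁻¹)⁻¹ := by rw [inv_inv]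
    rw [this, Equiv.Perm.support_conj, Finset.card_map]
  rw [mem_OmS]
  refine ⟨mem_Trs.mpr ⟨?_, fixesOutside_top _⟩, mem_Trs.mpr ⟨?_, fixesOutside_top _⟩, ?_⟩
  · rw [show (conjP δ x).1 = δ⁻¹ * x.1 * δ from rfl, hsupp]
    exact (mem_Trs.mp hx1).1
  · rw [show (conjP δ x).2 = δ⁻¹ * x.2 * δ from rfl, hsupp]
    exact (mem_Trs.mp hx2).1
  · show δ⁻¹ * x.1 * δ * (δ⁻¹ * x.2 * δ) = π
    have : δ⁻¹ * x.1 * δ * (δ⁻¹ * x.2 * δ) = δ⁻¹ * (x.1 * x.2) * δ := by group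
    rw [this, hprod, mul_assoc, ← hδc, ← mul_assoc, inv_mul_cancel, one_mul]

end Lemma33

open Lemma33 in
/-- Lemma 3.3: for 2r ≤ n and π ∈ S_{2r}, the conjugation action of C_{S_n}(π)
on Ω_{n,r}(π) (which is well defined: it sends Ω_{n,r}(π) to itself) has the
same number of orbits as the conjugation action of C_{S_{2r}}(π) on Ω_{2r,r}(π). -/
theorem numOrbits_eq (n r : ℕ) (hr : 1 ≤ r) (h2r : 2 * r ≤ n)
    (π : P n) (hπ : FixesOutside n (2 * r) π) :
    (∀ δ ∈ cent n n π, ∀ x ∈ OmS n r n π,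
        (δ⁻¹ * x.1 * δ, δ⁻¹ * x.2 * δ) ∈ OmS n r n π) ∧
    numOrbits n (cent n n π) (OmS n r n π)
      = numOrbits n (cent n (2 * r) π) (OmS n r (2 * r) π) := by
  classical
  refine ⟨fun δ hδ x hx => conj_mem_OmS_top hδ hx, ?_⟩
  set Cb := cent n n π with hCb
  set Cs := cent n (2 * r) π with hCs
  set Ωb := OmS n r n π with hΩb
  set Ωs := OmS n r (2 * r) π with hΩs
  have hΩsub : Ωs ⊆ Ωb := by
    intro x hx
    rw [hΩs, mem_OmS] at hx
    rw [hΩb, mem_OmS]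
    exact ⟨mem_Trs.mpr ⟨(mem_Trs.mp hx.1).1, fixesOutside_top _⟩,
      mem_Trs.mpr ⟨(mem_Trs.mp hx.2.1).1, fixesOutside_top _⟩, hx.2.2⟩
  have hCsub : Cs ⊆ Cb := by
    intro δ hδ
    rw [hCs, mem_cent] at hδ
    exact mem_cent.mpr ⟨hδ.1, fixesOutside_top _⟩
  have himeq : Ωb.image (orbitOf n Cb Ωb) = Ωs.image (orbitOf n Cb Ωb) := by
    apply Finset.Subset.antisymm
    · intro O hO
      obtain ⟨x, hx, rfl⟩ := Finset.mem_image.mp hO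
      obtain ⟨δ, hδ, hmem⟩ := moveIn h2r hπ (hΩb ▸ hx)
      have hyb : conjP δ x ∈ Ωb := hΩsub hmem
      have heq : orbitOf n Cb Ωb (conjP δ x) = orbitOf n Cb Ωb x :=
        orbitOf_eq_of_mem hx (mem_orbitOf.mpr ⟨hyb, δ, hδ, rfl⟩)
      rw [← heq]
      exact Finset.mem_image_of_mem _ hmem
    · exact Finset.image_subset_image hΩsub
  have hkey : ∀ x ∈ Ωs, orbitOf n Cb Ωb x ∩ Ωs = orbitOf n Cs Ωs x := by
    intro x hx
    ext y
    rw [Finset.mem_inter, mem_orbitOf, mem_orbitOf]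
    constructor
    · rintro ⟨⟨hyb, δ, hδ, hcy⟩, hys⟩
      obtain ⟨δ', hδ', hcy'⟩ := restrict h2r (hΩs ▸ hx) (hΩs ▸ hys) hδ hcy
      exact ⟨hys, δ', hδ', hcy'⟩
    · rintro ⟨hys, δ, hδ, hcy⟩
      exact ⟨⟨hΩsub hys, δ, hCsub hδ, hcy⟩, hys⟩
  have hinter : Set.InjOn (· ∩ Ωs) ↑(Ωs.image (orbitOf n Cb Ωb)) := by
    intro O₁ h₁ O₂ h₂ heq
    simp only [Finset.coe_image, Set.mem_image, Finset.mem_coe] at h₁ h₂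
    obtain ⟨x, hx, rfl⟩ := h₁
    obtain ⟨y, hy, rfl⟩ := h₂
    have hxmem : x ∈ orbitOf n Cb Ωb y := by
      have hx' : x ∈ orbitOf n Cb Ωb x ∩ Ωs :=
        Finset.mem_inter.mpr ⟨self_mem_orbitOf (hΩsub hx), hx⟩
      simp only at heq
      rw [heq] at hx'
      exact (Finset.mem_inter.mp hx').1
    exact orbitOf_eq_of_mem (hΩsub hy) hxmem
  calc numOrbits n Cb Ωb = (Ωs.image (orbitOf n Cb Ωb)).card := by
        rw [numOrbits, himeq]
    _ = ((Ωs.image (orbitOf n Cb Ωb)).image (· ∩ Ωs)).card :=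
        (Finset.card_image_of_injOn hinter).symm
    _ = (Ωs.image (fun x => orbitOf n Cb Ωb x ∩ Ωs)).card := by
        rw [Finset.image_image]
        rfl
    _ = (Ωs.image (orbitOf n Cs Ωs)).card := by
        rw [Finset.image_congr hkey]
    _ = numOrbits n Cs Ωs := rfl
end

section
/- Let r ∈ [n] with 2r ≤ n, π ∈ S_{2r}, and let (σ₁,τ₁),...,(σ_s,τ_s) be a complete set of representatives of the orbits of the conjugation action of C_{S_{2r}}(π) on Ω_{2r,r}(π). Then |Ω_{n,r}(π)| = Σ_{i=1}^{s} |C_{S_n}(π)| / |C_{S_n}(π) ∩ C_{S_n}(σ_i)|. -/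
open Finset

set_option maxHeartbeats 1000000
namespace OmegaAux

variable {n : ℕ}

def cj (δ : P n) (p : P n × P n) : P n × P n := (δ⁻¹ * p.1 * δ, δ⁻¹ * p.2 * δ)

lemma cj_cj (δ₁ δ₂ : P n) (p : P n × P n) : cj δ₂ (cj δ₁ p) = cj (δ₁ * δ₂) p := by
  simp [cj, mul_assoc]

lemma cj_one (p : P n × P n) : cj 1 p = p := by simp [cj]

lemma cj_inv (δ : P n) (p : P n × P n) : cj δ⁻¹ (cj δ p) = p := by
  rw [cj_cj]; simp [cj_one]

lemma fixesOutside_n (σ : P n) : FixesOutside n n σ := fun i h => absurd i.isLt h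

lemma mem_cent_iff {s : ℕ} {π δ : P n} :
    δ ∈ cent n s π ↔ δ * π = π * δ ∧ FixesOutside n s δ := by
  simp [cent]

lemma mem_centn_iff {π δ : P n} : δ ∈ cent n n π ↔ δ * π = π * δ := by
  simp [cent, fixesOutside_n]

lemma mem_OmS_iff {r s : ℕ} {π : P n} {p : P n × P n} :
    p ∈ OmS n r s π ↔ (p.1.support.card ≤ r ∧ FixesOutside n s p.1) ∧
      (p.2.support.card ≤ r ∧ FixesOutside n s p.2) ∧ p.1 * p.2 = π := by
  simp [OmS, Trs, Finset.mem_filter, Finset.mem_product, and_assoc]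

lemma card_support_cj (δ σ : P n) : (δ⁻¹ * σ * δ).support.card = σ.support.card := by
  have h : δ⁻¹ * σ * δ = δ⁻¹ * σ * (δ⁻¹)⁻¹ := by simp
  rw [h, Equiv.Perm.card_support_conj]

lemma supp_lt {s : ℕ} {σ : P n} (h : FixesOutside n s σ) {i : Fin n}
    (hi : i ∈ σ.support) : (i : ℕ) < s := by
  by_contra hk; exact (Equiv.Perm.mem_support.1 hi) (h i hk)

lemma card_filter_lt {m : ℕ} (h : m ≤ n) :
    (univ.filter fun i : Fin n => (i : ℕ) < m).card = m := by
  have key : (univ.filter fun i : Fin n => (i : ℕ) < m).card = (univ : Finset (Fin m)).card := by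
    apply Finset.card_bij
      (fun a (ha : a ∈ univ.filter fun i : Fin n => (i : ℕ) < m) =>
        (⟨(a : ℕ), (Finset.mem_filter.1 ha).2⟩ : Fin m))
    · intro a ha; exact Finset.mem_univ _
    · intro a₁ h₁ a₂ h₂ he
      exact Fin.ext (by simpa using he)
    · intro b _
      refine ⟨⟨(b : ℕ), lt_of_lt_of_le b.isLt h⟩, ?_, rfl⟩
      simp [b.isLt]
  simpa using key

lemma exists_perm_extend (U A B : Finset (Fin n)) (hAU : A ⊆ U) (hBU : B ⊆ U)
    (e : {x // x ∈ A} ≃ {x // x ∈ B}) :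
    ∃ δ : P n, (∀ i (h : i ∈ A), δ i = (e ⟨i, h⟩ : Fin n)) ∧
      (∀ i ∈ U, δ i ∈ U) ∧ (∀ i ∉ U, δ i = i) := by
  classical
  set α := {x : Fin n // x ∈ U}
  let e' : {x : α // (x : Fin n) ∈ A} ≃ {x : α // (x : Fin n) ∈ B} :=
    { toFun := fun z => ⟨⟨(e ⟨z.1.1, z.2⟩ : Fin n), hBU (e ⟨z.1.1, z.2⟩).2⟩, (e ⟨z.1.1, z.2⟩).2⟩
      invFun := fun z => ⟨⟨(e.symm ⟨z.1.1, z.2⟩ : Fin n), hAU (e.symm ⟨z.1.1, z.2⟩).2⟩,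
        (e.symm ⟨z.1.1, z.2⟩).2⟩
      left_inv := fun z => by
        apply Subtype.ext; apply Subtype.ext; simp
      right_inv := fun z => by
        apply Subtype.ext; apply Subtype.ext; simp }
  let σ : Equiv.Perm α := e'.extendSubtype
  refine ⟨Equiv.Perm.ofSubtype (p := fun x : Fin n => x ∈ U) σ, ?_, ?_, ?_⟩
  · intro i h
    rw [Equiv.Perm.ofSubtype_apply_of_mem σ (hAU h)]
    have : σ ⟨i, hAU h⟩ = ((e' ⟨⟨i, hAU h⟩, h⟩ : {x : α // (x : Fin n) ∈ B}) : α) :=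
      Equiv.extendSubtype_apply_of_mem e' ⟨i, hAU h⟩ h
    rw [this]
    rfl
  · intro i hi
    rw [Equiv.Perm.ofSubtype_apply_of_mem σ hi]
    exact (σ ⟨i, hi⟩).2
  · intro i hi
    exact Equiv.Perm.ofSubtype_apply_of_not_mem σ hi

lemma commute_of_fix (U : Finset (Fin n)) (δ ρ : P n) (hδU : ∀ i ∈ U, δ i ∈ U)
    (hδc : ∀ i ∉ U, δ i = i) (hρ : ∀ i ∈ U, ρ i = i) : δ * ρ = ρ * δ := by
  ext i
  simp only [Equiv.Perm.mul_apply]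
  by_cases hi : i ∈ U
  · rw [hρ i hi, hρ _ (hδU i hi)]
  · have hρi : ρ i ∉ U := by
      intro hmem
      have h2 : ρ i = i := ρ.injective (hρ _ hmem)
      rw [h2] at hmem; exact hi hmem
    rw [hδc i hi, hδc _ hρi]

lemma step_a {r : ℕ} (h2r : 2 * r ≤ n) (π : P n) (hπ : FixesOutside n (2 * r) π)
    (p : P n × P n) (hp : p ∈ OmS n r n π) :
    ∃ δ ∈ cent n n π, cj δ p ∈ OmS n r (2 * r) π := by
  classical
  obtain ⟨⟨h1c, -⟩, ⟨h2c, -⟩, hprod⟩ := mem_OmS_iff.1 hp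
  set M : Finset (Fin n) := p.1.support ∪ p.2.support with hM
  have hsuppπ : π.support ⊆ M := by
    intro i hi
    have hne : π i ≠ i := Equiv.Perm.mem_support.1 hi
    rw [← hprod] at hne
    by_cases h2 : p.2 i = i
    · apply Finset.mem_union_left
      rw [Equiv.Perm.mem_support]
      intro h1; apply hne
      simp [Equiv.Perm.mul_apply, h2, h1]
    · exact Finset.mem_union_right _ (Equiv.Perm.mem_support.2 h2)
  have hMcard : M.card ≤ 2 * r := by
    calc M.card ≤ p.1.support.card + p.2.support.card := Finset.card_union_le _ _
    _ ≤ r + r := Nat.add_le_add h1c h2c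
    _ = 2 * r := by ring
  set A : Finset (Fin n) := M.filter (fun i => ¬ ((i : ℕ) < 2 * r)) with hA
  set W : Finset (Fin n) := univ.filter (fun i : Fin n => (i : ℕ) < 2 * r) with hW
  set B : Finset (Fin n) := W \ M with hB
  have hWcard : W.card = 2 * r := card_filter_lt h2r
  have hsplit : (M.filter (fun i : Fin n => ((i : ℕ) < 2 * r))).card + A.card = M.card :=
    Finset.card_filter_add_card_filter_not (s := M)
      (p := fun i : Fin n => (i : ℕ) < 2 * r)
  have hWM : W ∩ M = M.filter (fun i : Fin n => ((i : ℕ) < 2 * r)) := by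
    ext i; simp [hW, And.comm]
  have hBA : A.card ≤ B.card := by
    have h3 : B.card + (W ∩ M).card = W.card := Finset.card_sdiff_add_card_inter _ _
    rw [hWM] at h3
    omega
  obtain ⟨B', hB'B, hB'card⟩ := Finset.exists_subset_card_eq hBA
  obtain ⟨δ, hδA, hδU, hδc⟩ := exists_perm_extend (A ∪ B') A B'
    Finset.subset_union_left Finset.subset_union_right (Finset.equivOfCardEq hB'card.symm)
  -- basic membership facts
  have hB'W : B' ⊆ W := hB'B.trans (Finset.sdiff_subset)
  have hB'M : ∀ i ∈ B', i ∉ M := fun i hi => (Finset.mem_sdiff.1 (hB'B hi)).2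
  have hfixπ : ∀ i ∈ A ∪ B', π i = i := by
    intro i hi
    rcases Finset.mem_union.1 hi with hiA | hiB
    · exact hπ i (Finset.mem_filter.1 hiA).2
    · by_contra hne
      exact hB'M i hiB (hsuppπ (Equiv.Perm.mem_support.2 hne))
  have hcomm : δ * π = π * δ := commute_of_fix (A ∪ B') δ π hδU hδc hfixπ
  refine ⟨δ, mem_centn_iff.2 hcomm, ?_⟩
  have hnotA : ∀ i : Fin n, ¬ ((i : ℕ) < 2 * r) → i ∉ A → i ∉ A ∪ B' := by
    intro i hlt hiA
    rw [Finset.mem_union]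
    rintro (h | h)
    · exact hiA h
    · exact hlt (Finset.mem_filter.1 (hB'W h)).2
  have hfix : ∀ σ : P n, σ.support ⊆ M → FixesOutside n (2 * r) (δ⁻¹ * σ * δ) := by
    intro σ hσ i hlt
    have key : σ (δ i) = δ i := by
      by_cases hiA : i ∈ A
      · have h1 : δ i ∈ B' := by
          rw [hδA i hiA]; exact (Finset.equivOfCardEq hB'card.symm ⟨i, hiA⟩).2
        by_contra hne
        exact hB'M _ h1 (hσ (Equiv.Perm.mem_support.2 hne))
      · have h0 : i ∉ A ∪ B' := hnotA i hlt hiA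
        rw [hδc i h0]
        by_contra hne
        exact hiA (Finset.mem_filter.2 ⟨hσ (Equiv.Perm.mem_support.2 hne), hlt⟩)
    simp [Equiv.Perm.mul_apply, key]
  rw [mem_OmS_iff]
  simp only [cj]
  refine ⟨⟨?_, ?_⟩, ⟨?_, ?_⟩, ?_⟩
  · rw [card_support_cj]; exact h1c
  · exact hfix p.1 Finset.subset_union_left
  · rw [card_support_cj]; exact h2c
  · exact hfix p.2 Finset.subset_union_right
  · have h5 : (δ⁻¹ * p.1 * δ) * (δ⁻¹ * p.2 * δ) = δ⁻¹ * (p.1 * p.2) * δ := by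
      group
    rw [h5, hprod, mul_assoc, ← hcomm]
    group

lemma step_b {r : ℕ} (π : P n) (x y : P n × P n)
    (hx : x ∈ OmS n r (2 * r) π) (hy : y ∈ OmS n r (2 * r) π)
    (γ : P n) (h : cj γ x = y) :
    ∃ δ ∈ cent n (2 * r) π, cj δ x = y := by
  classical
  obtain ⟨⟨hx1c, hx1f⟩, ⟨hx2c, hx2f⟩, hxprod⟩ := mem_OmS_iff.1 hx
  obtain ⟨⟨hy1c, hy1f⟩, ⟨hy2c, hy2f⟩, hyprod⟩ := mem_OmS_iff.1 hy
  set Mx : Finset (Fin n) := x.1.support ∪ x.2.support with hMx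
  set My : Finset (Fin n) := y.1.support ∪ y.2.support with hMy
  set W : Finset (Fin n) := univ.filter (fun i : Fin n => (i : ℕ) < 2 * r) with hW
  have hMxW : Mx ⊆ W := by
    intro i hi
    rcases Finset.mem_union.1 hi with h' | h'
    · exact Finset.mem_filter.2 ⟨Finset.mem_univ _, supp_lt hx1f h'⟩
    · exact Finset.mem_filter.2 ⟨Finset.mem_univ _, supp_lt hx2f h'⟩
  have hMyW : My ⊆ W := by
    intro i hi
    rcases Finset.mem_union.1 hi with h' | h'
    · exact Finset.mem_filter.2 ⟨Finset.mem_univ _, supp_lt hy1f h'⟩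
    · exact Finset.mem_filter.2 ⟨Finset.mem_univ _, supp_lt hy2f h'⟩
  have h1 : γ⁻¹ * x.1 * γ = y.1 := congrArg Prod.fst h
  have h2 : γ⁻¹ * x.2 * γ = y.2 := congrArg Prod.snd h
  have k1 : ∀ i, y.1 (γ⁻¹ i) = γ⁻¹ (x.1 i) := by
    intro i
    conv_lhs => rw [← h1]
    simp [Equiv.Perm.mul_apply]
  have k2 : ∀ i, y.2 (γ⁻¹ i) = γ⁻¹ (x.2 i) := by
    intro i
    conv_lhs => rw [← h2]
    simp [Equiv.Perm.mul_apply]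
  have h1' : x.1 = γ * y.1 * γ⁻¹ := by rw [← h1]; group
  have h2' : x.2 = γ * y.2 * γ⁻¹ := by rw [← h2]; group
  have k1' : ∀ i, x.1 (γ i) = γ (y.1 i) := by
    intro i
    conv_lhs => rw [h1']
    simp [Equiv.Perm.mul_apply]
  have k2' : ∀ i, x.2 (γ i) = γ (y.2 i) := by
    intro i
    conv_lhs => rw [h2']
    simp [Equiv.Perm.mul_apply]
  have eMxMy : ∀ i ∈ Mx, γ⁻¹ i ∈ My := by
    intro i hi
    rcases Finset.mem_union.1 hi with h' | h'
    · apply Finset.mem_union_left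
      rw [Equiv.Perm.mem_support, k1 i]
      exact fun hc => (Equiv.Perm.mem_support.1 h') (γ⁻¹.injective hc)
    · apply Finset.mem_union_right
      rw [Equiv.Perm.mem_support, k2 i]
      exact fun hc => (Equiv.Perm.mem_support.1 h') (γ⁻¹.injective hc)
  have eMyMx : ∀ i ∈ My, γ i ∈ Mx := by
    intro i hi
    rcases Finset.mem_union.1 hi with h' | h'
    · apply Finset.mem_union_left
      rw [Equiv.Perm.mem_support, k1' i]
      exact fun hc => (Equiv.Perm.mem_support.1 h') (γ.injective hc)
    · apply Finset.mem_union_right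
      rw [Equiv.Perm.mem_support, k2' i]
      exact fun hc => (Equiv.Perm.mem_support.1 h') (γ.injective hc)
  let e : {z // z ∈ Mx} ≃ {z // z ∈ My} :=
    { toFun := fun z => ⟨γ⁻¹ z.1, eMxMy _ z.2⟩
      invFun := fun z => ⟨γ z.1, eMyMx _ z.2⟩
      left_inv := fun z => by apply Subtype.ext; simp
      right_inv := fun z => by apply Subtype.ext; simp }
  obtain ⟨δ₀, hδ₀A, hδ₀U, hδ₀c⟩ := exists_perm_extend W Mx My hMxW hMyW e
  have hδ₀Mx : ∀ i ∈ Mx, δ₀ i = γ⁻¹ i := fun i hi => hδ₀A i hi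
  have hsurj : ∀ b ∈ My, ∃ a ∈ Mx, δ₀ a = b := by
    intro b hb
    refine ⟨γ b, eMyMx b hb, ?_⟩
    rw [hδ₀Mx _ (eMyMx b hb)]
    simp
  have main : ∀ (σx σy : P n), σx.support ⊆ Mx → σy.support ⊆ My →
      (∀ i, σy (γ⁻¹ i) = γ⁻¹ (σx i)) → ∀ j, δ₀ (σx j) = σy (δ₀ j) := by
    intro σx σy hsx hsy hk j
    by_cases hj : j ∈ Mx
    · have hxj : σx j ∈ Mx := by
        by_cases hs : j ∈ σx.support
        · exact hsx (Equiv.Perm.apply_mem_support.2 hs)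
        · rw [Equiv.Perm.notMem_support.1 hs]
          exact hj
      rw [hδ₀Mx _ hxj, hδ₀Mx _ hj, hk j]
    · have hfs : σx j = j := by
        by_contra hne; exact hj (hsx (Equiv.Perm.mem_support.2 hne))
      rw [hfs]
      have hnm : δ₀ j ∉ My := by
        intro hmem
        obtain ⟨a, ha, hae⟩ := hsurj _ hmem
        exact hj (by rwa [← δ₀.injective hae])
      have hfy : σy (δ₀ j) = δ₀ j := by
        by_contra hne; exact hnm (hsy (Equiv.Perm.mem_support.2 hne))
      rw [hfy]
  have m1 : ∀ j, δ₀ (x.1 j) = y.1 (δ₀ j) :=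
    main x.1 y.1 Finset.subset_union_left Finset.subset_union_left k1
  have m2 : ∀ j, δ₀ (x.2 j) = y.2 (δ₀ j) :=
    main x.2 y.2 Finset.subset_union_right Finset.subset_union_right k2
  have c1 : δ₀ * x.1 = y.1 * δ₀ := by
    ext j; simp [Equiv.Perm.mul_apply, m1 j]
  have c2 : δ₀ * x.2 = y.2 * δ₀ := by
    ext j; simp [Equiv.Perm.mul_apply, m2 j]
  have hδ₀π : δ₀ * π = π * δ₀ := by
    conv_lhs => rw [← hxprod]
    conv_rhs => rw [← hyprod]
    calc δ₀ * (x.1 * x.2) = (δ₀ * x.1) * x.2 := by rw [mul_assoc]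
    _ = y.1 * (δ₀ * x.2) := by rw [c1, mul_assoc]
    _ = y.1 * (y.2 * δ₀) := by rw [c2]
    _ = (y.1 * y.2) * δ₀ := by rw [mul_assoc]
  refine ⟨δ₀⁻¹, mem_cent_iff.2 ⟨?_, ?_⟩, ?_⟩
  · have hc : Commute δ₀ π := hδ₀π
    exact hc.inv_left
  · intro i hi
    have hiW : i ∉ W := fun hmem => hi (Finset.mem_filter.1 hmem).2
    exact (Equiv.Perm.inv_eq_iff_eq).2 (hδ₀c i hiW).symm
  · have e1 : (δ₀⁻¹)⁻¹ * x.1 * δ₀⁻¹ = y.1 := by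
      rw [inv_inv, c1]; group
    have e2 : (δ₀⁻¹)⁻¹ * x.2 * δ₀⁻¹ = y.2 := by
      rw [inv_inv, c2]; group
    have hpair : cj δ₀⁻¹ x = (y.1, y.2) := by
      simp only [cj, Prod.mk.injEq]
      exact ⟨e1, e2⟩
    simpa using hpair

lemma one_mem_cent (s : ℕ) (π : P n) : (1 : P n) ∈ cent n s π :=
  mem_cent_iff.2 ⟨by group, fun i _ => rfl⟩

lemma one_mem_centn (π : P n) : (1 : P n) ∈ cent n n π := one_mem_cent n π

lemma mul_mem_centn {π a b : P n} (ha : a ∈ cent n n π) (hb : b ∈ cent n n π) :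
    a * b ∈ cent n n π := by
  have ha' : Commute a π := mem_centn_iff.1 ha
  have hb' : Commute b π := mem_centn_iff.1 hb
  exact mem_centn_iff.2 (ha'.mul_left hb')

lemma inv_mem_centn {π a : P n} (ha : a ∈ cent n n π) : a⁻¹ ∈ cent n n π := by
  have ha' : Commute a π := mem_centn_iff.1 ha
  exact mem_centn_iff.2 ha'.inv_left

lemma cent_sub (s : ℕ) (π : P n) : cent n s π ⊆ cent n n π := fun δ hδ =>
  mem_centn_iff.2 (mem_cent_iff.1 hδ).1

lemma OmS_sub (r s : ℕ) (π : P n) : OmS n r s π ⊆ OmS n r n π := by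
  intro p hp
  obtain ⟨⟨h1, -⟩, ⟨h2, -⟩, h3⟩ := mem_OmS_iff.1 hp
  exact mem_OmS_iff.2 ⟨⟨h1, fixesOutside_n _⟩, ⟨h2, fixesOutside_n _⟩, h3⟩

lemma cj_mem_OmS {r : ℕ} {π δ : P n} (hδ : δ ∈ cent n n π) {p : P n × P n}
    (hp : p ∈ OmS n r n π) : cj δ p ∈ OmS n r n π := by
  obtain ⟨⟨h1, -⟩, ⟨h2, -⟩, hprod⟩ := mem_OmS_iff.1 hp
  have hcomm := mem_centn_iff.1 hδ
  rw [mem_OmS_iff]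
  simp only [cj]
  refine ⟨⟨?_, fixesOutside_n _⟩, ⟨?_, fixesOutside_n _⟩, ?_⟩
  · rw [card_support_cj]; exact h1
  · rw [card_support_cj]; exact h2
  · have h5 : (δ⁻¹ * p.1 * δ) * (δ⁻¹ * p.2 * δ) = δ⁻¹ * (p.1 * p.2) * δ := by group
    rw [h5, hprod, mul_assoc, ← hcomm]
    group

end OmegaAux

open OmegaAux

/-- Lemma 3.4: if R is a complete set of representatives of the orbits of the
conjugation action of C_{S_{2r}}(π) on Ω_{2r,r}(π), then
|Ω_{n,r}(π)| = Σ_{(σ,τ) ∈ R} |C_{S_n}(π)| / |C_{S_n}(π) ∩ C_{S_n}(σ)|. -/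
theorem omega_card_sum (n r : ℕ) (hr : 1 ≤ r) (h2r : 2 * r ≤ n)
    (π : P n) (hπ : FixesOutside n (2 * r) π)
    (R : Finset (P n × P n)) (hRsub : R ⊆ OmS n r (2 * r) π)
    (hR : ∀ x ∈ OmS n r (2 * r) π, ∃! y, y ∈ R ∧
      ∃ δ ∈ cent n (2 * r) π, (δ⁻¹ * x.1 * δ, δ⁻¹ * x.2 * δ) = y) :
    (OmS n r n π).card =
      ∑ x ∈ R, (cent n n π).card / ((cent n n π) ∩ (cent n n x.1)).card := by
  classical
  have cover : OmS n r n π =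
      R.biUnion (fun x => (cent n n π).image (fun δ => cj δ x)) := by
    apply Finset.Subset.antisymm
    · intro p hp
      obtain ⟨δ₁, hδ₁, hq⟩ := step_a h2r π hπ p hp
      obtain ⟨y, ⟨hyR, δ₂, hδ₂, hcjy⟩, -⟩ := hR _ hq
      rw [Finset.mem_biUnion]
      refine ⟨y, hyR, ?_⟩
      rw [Finset.mem_image]
      refine ⟨(δ₁ * δ₂)⁻¹, inv_mem_centn (mul_mem_centn hδ₁ (cent_sub _ π hδ₂)), ?_⟩
      have h4 : cj (δ₁ * δ₂) p = y := by rw [← cj_cj]; exact hcjy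
      calc cj (δ₁ * δ₂)⁻¹ y = cj (δ₁ * δ₂)⁻¹ (cj (δ₁ * δ₂) p) := by rw [h4]
      _ = p := cj_inv _ _
    · intro p hp
      rw [Finset.mem_biUnion] at hp
      obtain ⟨x, hxR, hp⟩ := hp
      rw [Finset.mem_image] at hp
      obtain ⟨δ, hδC, rfl⟩ := hp
      exact cj_mem_OmS hδC (OmS_sub r (2 * r) π (hRsub hxR))
  have disj : ∀ x ∈ R, ∀ x' ∈ R, x ≠ x' →
      Disjoint ((cent n n π).image (fun δ => cj δ x))
        ((cent n n π).image (fun δ => cj δ x')) := by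
    intro x hx x' hx' hne
    rw [Finset.disjoint_left]
    intro p hpx hpx'
    obtain ⟨δ₁, hδ₁, he₁⟩ := Finset.mem_image.1 hpx
    obtain ⟨δ₂, hδ₂, he₂⟩ := Finset.mem_image.1 hpx'
    have heq : cj δ₂ x' = cj δ₁ x := he₂.trans he₁.symm
    have h4 : cj (δ₂ * δ₁⁻¹) x' = x := by rw [← cj_cj, heq, cj_inv]
    obtain ⟨δ, hδ, hδeq⟩ := step_b π x' x (hRsub hx') (hRsub hx) (δ₂ * δ₁⁻¹) h4
    obtain ⟨y, -, huniq⟩ := hR x' (hRsub hx')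
    have e1 : x = y := huniq x ⟨hx, δ, hδ, hδeq⟩
    have e2 : x' = y := huniq x' ⟨hx', 1, one_mem_cent (2 * r) π, by simpa using cj_one x'⟩
    exact hne (e1.trans e2.symm)
  have orbcard : ∀ x ∈ R, ((cent n n π).image (fun δ => cj δ x)).card =
      (cent n n π).card / ((cent n n π) ∩ (cent n n x.1)).card := by
    intro x hxR
    have hxprod : x.1 * x.2 = π := (mem_OmS_iff.1 (hRsub hxR)).2.2
    have stab_fix : ∀ s ∈ (cent n n π) ∩ (cent n n x.1), cj s x = x := by
      intro s hs
      obtain ⟨hsC, hs1⟩ := Finset.mem_inter.1 hs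
      have c1 : s * x.1 = x.1 * s := mem_centn_iff.1 hs1
      have cπ : Commute s π := mem_centn_iff.1 hsC
      have c2 : s * x.2 = x.2 * s := by
        have hx2 : x.2 = x.1⁻¹ * π := by rw [← hxprod]; group
        rw [hx2]
        have cx1 : Commute s x.1 := c1
        exact cx1.inv_right.mul_right cπ
      have e1 : s⁻¹ * x.1 * s = x.1 := by rw [mul_assoc, ← c1]; group
      have e2 : s⁻¹ * x.2 * s = x.2 := by rw [mul_assoc, ← c2]; group
      have hpair : cj s x = (x.1, x.2) := by
        simp only [cj, Prod.mk.injEq]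
        exact ⟨e1, e2⟩
      simpa using hpair
    have fib : ∀ y ∈ (cent n n π).image (fun δ => cj δ x),
        ((cent n n π).filter (fun δ => cj δ x = y)).card =
          ((cent n n π) ∩ (cent n n x.1)).card := by
      intro y hy
      obtain ⟨δ₀, hδ₀C, hδ₀⟩ := Finset.mem_image.1 hy
      refine (Finset.card_bij
        (fun s (hs : s ∈ (cent n n π) ∩ (cent n n x.1)) => s * δ₀) ?_ ?_ ?_).symm
      · intro s hs
        obtain ⟨hsC, -⟩ := Finset.mem_inter.1 hs
        refine Finset.mem_filter.2 ⟨mul_mem_centn hsC hδ₀C, ?_⟩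
        rw [← cj_cj, stab_fix s hs, hδ₀]
      · intro a ha b hb he
        exact mul_right_cancel he
      · intro δ hδf
        obtain ⟨hδC, hδe⟩ := Finset.mem_filter.1 hδf
        refine ⟨δ * δ₀⁻¹, ?_, by group⟩
        refine Finset.mem_inter.2 ⟨mul_mem_centn hδC (inv_mem_centn hδ₀C),
          mem_centn_iff.2 ?_⟩
        have hfst : δ⁻¹ * x.1 * δ = δ₀⁻¹ * x.1 * δ₀ :=
          congrArg Prod.fst (hδe.trans hδ₀.symm)
        calc δ * δ₀⁻¹ * x.1 = δ * (δ₀⁻¹ * x.1 * δ₀) * δ₀⁻¹ := by group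
        _ = δ * (δ⁻¹ * x.1 * δ) * δ₀⁻¹ := by rw [hfst]
        _ = x.1 * (δ * δ₀⁻¹) := by group
    have hsum : (cent n n π).card =
        ∑ y ∈ (cent n n π).image (fun δ => cj δ x),
          ((cent n n π).filter (fun δ => cj δ x = y)).card :=
      Finset.card_eq_sum_card_fiberwise (fun δ hδ => Finset.mem_image_of_mem _ hδ)
    rw [Finset.sum_congr rfl fib, Finset.sum_const, smul_eq_mul] at hsum
    have hS1 : 0 < ((cent n n π) ∩ (cent n n x.1)).card :=
      Finset.card_pos.2 ⟨1, Finset.mem_inter.2 ⟨one_mem_centn π, one_mem_centn x.1⟩⟩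
    rw [hsum, Nat.mul_div_cancel _ hS1]
  rw [cover, Finset.card_biUnion disj]
  exact Finset.sum_congr rfl orbcard
end
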